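/- Let k ≥ 1 and let u, v be words of length at least k - 1. Then u ~_k v if and only if u and v have the same prefix of length k-1, the same suffix of length k-1, and |u|_z = |v|_z for every word z of length exactly k. -/

import Mathlib

/-- The number of (possibly overlapping) occurrences of `z` as a factor of `u`. -/
def FactorCount {A : Type*} [DecidableEq A] (u z : List A) : ℕ :=
  (List.range (u.length + 1 - z.length)).countP fun i =>
    decide ((u.drop i).take z.length = z)

/-- `k`-abelian equivalence: every nonempty word of length at most `k` occurs
equally often as a factor of `u` and of `v`. -/
def KAbEq {A : Type*} [DecidableEq A] (k : ℕ) (u v : List A) : Prop :=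
  ∀ z : List A, z ≠ [] → z.length ≤ k → FactorCount u z = FactorCount v z

section Aux

variable {A : Type*} [DecidableEq A]

private lemma countP_range_eq_sum (m : ℕ) (p : ℕ → Prop) [DecidablePred p] :
    (List.range m).countP (fun i => decide (p i)) =
      ∑ i ∈ Finset.range m, if p i then 1 else 0 := by
  induction m with
  | zero => simp
  | succ n ih =>
    rw [List.range_succ, List.countP_append, Finset.sum_range_succ, ih]
    simp [List.countP_cons]

private lemma factorCount_eq_sum (u z : List A) :
    FactorCount u z = ∑ i ∈ Finset.range (u.length + 1 - z.length),
      if (u.drop i).take z.length = z then 1 else 0 := by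
  unfold FactorCount
  exact countP_range_eq_sum _ _

/-- Right-extension: occurrences of `z` split into occurrences of `z ++ [a]`
plus one if `z` is the suffix of `u` of length `|z|`. -/
private lemma key_right (u z : List A) (S : Finset A) (hS : ∀ a ∈ u, a ∈ S) :
    FactorCount u z = (∑ a ∈ S, FactorCount u (z ++ [a])) +
      (if u.drop (u.length - z.length) = z then 1 else 0) := by
  set n := z.length with hn
  clear_value n
  by_cases hlen : n ≤ u.length
  · rw [factorCount_eq_sum]
    simp only [← hn]
    have hm : u.length + 1 - n = (u.length - n) + 1 := by omega
    rw [hm, Finset.sum_range_succ]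
    have hlast : (u.drop (u.length - n)).take n = u.drop (u.length - n) := by
      apply List.take_of_length_le
      rw [List.length_drop]; omega
    rw [hlast]
    congr 1
    -- remaining: sum over i < u.length - n
    have step : ∀ i ∈ Finset.range (u.length - n),
        (if (u.drop i).take n = z then 1 else 0) =
          ∑ a ∈ S, if (u.drop i).take (z ++ [a]).length = z ++ [a] then 1 else 0 := by
      intro i hi
      rw [Finset.mem_range] at hi
      have hin : i + n < u.length := by omega
      have hget : (u.drop i)[n]? = some (u[i + n]'hin) := by
        rw [List.getElem?_drop]
        exact List.getElem?_eq_getElem hin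
      have htake : ∀ a : A, ((u.drop i).take (n + 1) = z ++ [a]) ↔
          ((u.drop i).take n = z ∧ u[i + n]'hin = a) := by
        intro a
        rw [List.take_succ, hget]
        constructor
        · intro h
          have hlen2 : ((u.drop i).take n).length = z.length := by
            rw [List.length_take, List.length_drop]; omega
          have := List.append_inj h hlen2
          simp only [Option.toList_some] at this
          refine ⟨this.1, ?_⟩
          have := this.2
          simpa using this
        · rintro ⟨h1, h2⟩
          rw [h1, h2]; simp
      have hmem : u[i + n]'hin ∈ S := hS _ (List.getElem_mem hin)
      simp only [List.length_append, List.length_singleton, ← hn]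
      rw [Finset.sum_congr rfl (fun a _ => if_congr (htake a) rfl rfl)]
      by_cases hz : (u.drop i).take n = z
      · simp only [hz, eq_self_iff_true, true_and, if_true]
        rw [Finset.sum_ite_eq S (u[i + n]'hin) (fun _ => 1), if_pos hmem]
      · simp only [hz, false_and, if_false, Finset.sum_const_zero]
    rw [Finset.sum_congr rfl step, Finset.sum_comm]
    apply Finset.sum_congr rfl
    intro a _
    have hlen3 : (z ++ [a]).length = n + 1 := by
      rw [List.length_append, List.length_singleton, ← hn]
    have hb : u.length + 1 - (z ++ [a]).length = u.length - n := by
      rw [hlen3]; omega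
    rw [factorCount_eq_sum, hb]
  · -- u too short: everything is zero / false
    push_neg at hlen
    have h1 : FactorCount u z = 0 := by
      rw [factorCount_eq_sum]
      simp only [← hn]
      have : u.length + 1 - n = 0 := by omega
      rw [this]; simp
    have h2 : ∀ a ∈ S, FactorCount u (z ++ [a]) = 0 := by
      intro a _
      rw [factorCount_eq_sum]
      have : u.length + 1 - (z ++ [a]).length = 0 := by
        simp only [List.length_append, List.length_singleton]; omega
      rw [this]; simp
    have h3 : ¬ (u.drop (u.length - n) = z) := by
      intro h
      have := congrArg List.length h
      rw [List.length_drop] at this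
      omega
    rw [h1, Finset.sum_congr rfl h2, if_neg h3]
    simp

private lemma factorCount_reverse (u z : List A) :
    FactorCount u.reverse z.reverse = FactorCount u z := by
  set n := z.length with hn
  clear_value n
  by_cases hlen : n ≤ u.length
  · rw [factorCount_eq_sum, factorCount_eq_sum]
    simp only [List.length_reverse, ← hn]
    have hm : u.length + 1 - n = (u.length - n) + 1 := by omega
    rw [← Finset.sum_range_reflect (fun i => if (u.drop i).take n = z then 1 else 0)]
    apply Finset.sum_congr rfl
    intro i hi
    rw [Finset.mem_range] at hi
    have hi' : i ≤ u.length - n := by omega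
    have hidx : u.length + 1 - n - 1 - i = u.length - n - i := by omega
    rw [hidx]
    apply if_congr _ rfl rfl
    have h1 : u.reverse.drop i = (u.take (u.length - i)).reverse := by
      rw [List.reverse_take]
      congr 1
      omega
    rw [h1]
    have h2 : (u.take (u.length - i)).reverse.take n =
        ((u.take (u.length - i)).drop ((u.take (u.length - i)).length - n)).reverse := by
      rw [List.take_reverse]
    rw [h2]
    have hlt : (u.take (u.length - i)).length = u.length - i := by
      rw [List.length_take]; omega
    rw [List.reverse_inj]
    rw [hlt]
    have h3 : (u.take (u.length - i)).drop (u.length - i - n) =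
        (u.drop (u.length - i - n)).take n := by
      rw [List.drop_take]
      congr 1
      omega
    rw [h3]
    have : u.length - i - n = u.length - n - i := by omega
    rw [this]
  · push_neg at hlen
    rw [factorCount_eq_sum, factorCount_eq_sum]
    simp only [List.length_reverse, ← hn]
    have : u.length + 1 - n = 0 := by omega
    rw [this]
    simp

/-- Left-extension: occurrences of `z` split into occurrences of `a :: z`
plus one if `z` is the prefix of `u` of length `|z|`. -/
private lemma key_left (u z : List A) (S : Finset A) (hS : ∀ a ∈ u, a ∈ S) :
    FactorCount u z = (∑ a ∈ S, FactorCount u (a :: z)) +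
      (if u.take z.length = z then 1 else 0) := by
  have hS' : ∀ a ∈ u.reverse, a ∈ S := by
    intro a ha; exact hS a (List.mem_reverse.mp ha)
  have h := key_right u.reverse z.reverse S hS'
  rw [factorCount_reverse] at h
  rw [h]
  congr 1
  · apply Finset.sum_congr rfl
    intro a _
    rw [show z.reverse ++ [a] = (a :: z).reverse by simp, factorCount_reverse]
  · apply if_congr _ rfl rfl
    rw [List.length_reverse, List.length_reverse]
    have h1 : u.reverse.drop (u.length - z.length) = (u.take z.length).reverse :=
      (List.reverse_take (l := u) (i := z.length)).symm
    rw [h1, List.reverse_inj]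

end Aux

/-- For words `u, v` of length at least `k - 1`: `u ~_k v` iff `u` and `v` have
the same prefix of length `k - 1`, the same suffix of length `k - 1`, and every
word of length exactly `k` occurs equally often as a factor of `u` and of `v`. -/
theorem kAbEq_iff_prefix_suffix_kcounts {A : Type*} [DecidableEq A] (k : ℕ) (hk : 1 ≤ k)
    (u v : List A) (hu : k - 1 ≤ u.length) (hv : k - 1 ≤ v.length) :
    KAbEq k u v ↔
      u.take (k - 1) = v.take (k - 1) ∧
      u.drop (u.length - (k - 1)) = v.drop (v.length - (k - 1)) ∧
      ∀ z : List A, z.length = k → FactorCount u z = FactorCount v z := by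
  set S : Finset A := (u ++ v).toFinset with hSdef
  have hSu : ∀ a ∈ u, a ∈ S := by intro a ha; simp [hSdef, ha]
  have hSv : ∀ a ∈ v, a ∈ S := by intro a ha; simp [hSdef, ha]
  constructor
  · intro h
    have h3 : ∀ z : List A, z.length = k → FactorCount u z = FactorCount v z := by
      intro z hz
      apply h z _ hz.le
      intro hnil
      rw [hnil] at hz
      simp at hz
      omega
    refine ⟨?_, ?_, h3⟩
    · -- prefix
      by_cases hk1 : k = 1
      · simp [hk1]
      · have hn : 1 ≤ k - 1 := by omega
        set zu := u.take (k - 1) with hzu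
        have hzulen : zu.length = k - 1 := by
          rw [hzu, List.length_take]; omega
        have e1 := key_left u zu S hSu
        have e2 := key_left v zu S hSv
        have hcount : FactorCount u zu = FactorCount v zu := by
          apply h zu _ (by omega)
          intro hnil
          rw [hnil] at hzulen; simp at hzulen; omega
        have hcount1 : ∀ a ∈ S, FactorCount u (a :: zu) = FactorCount v (a :: zu) := by
          intro a _
          apply h3
          rw [List.length_cons, hzulen]; omega
        rw [hcount, e2, Finset.sum_congr rfl (fun a ha => (hcount1 a ha).symm)] at e1
        have hself : u.take zu.length = zu := by rw [hzulen]
        rw [if_pos hself] at e1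
        have : (if v.take zu.length = zu then 1 else 0) = 1 := by omega
        rw [hzulen] at this
        by_cases hfin : v.take (k - 1) = zu
        · exact hfin.symm
        · rw [if_neg hfin] at this; omega
    · -- suffix
      by_cases hk1 : k = 1
      · simp [hk1, List.drop_length]
      · have hn : 1 ≤ k - 1 := by omega
        set zu := u.drop (u.length - (k - 1)) with hzu
        have hzulen : zu.length = k - 1 := by
          rw [hzu, List.length_drop]; omega
        have e1 := key_right u zu S hSu
        have e2 := key_right v zu S hSv
        have hcount : FactorCount u zu = FactorCount v zu := by
          apply h zu _ (by omega)
          intro hnil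
          rw [hnil] at hzulen; simp at hzulen; omega
        have hcount1 : ∀ a ∈ S, FactorCount u (zu ++ [a]) = FactorCount v (zu ++ [a]) := by
          intro a _
          apply h3
          rw [List.length_append, hzulen, List.length_singleton]; omega
        rw [hcount, e2, Finset.sum_congr rfl (fun a ha => (hcount1 a ha).symm)] at e1
        have hself : u.drop (u.length - zu.length) = zu := by rw [hzulen]
        rw [if_pos hself] at e1
        have : (if v.drop (v.length - zu.length) = zu then 1 else 0) = 1 := by omega
        rw [hzulen] at this
        by_cases hfin : v.drop (v.length - (k - 1)) = zu
        · exact hfin.symm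
        · rw [if_neg hfin] at this; omega
  · rintro ⟨_h1, h2, h3⟩
    -- suffix agreement at every length ≤ k - 1
    have hsuf : ∀ n ≤ k - 1, u.drop (u.length - n) = v.drop (v.length - n) := by
      intro n hnle
      have hu' : u.drop (u.length - n) = (u.drop (u.length - (k - 1))).drop (k - 1 - n) := by
        rw [List.drop_drop]
        congr 1
        omega
      have hv' : v.drop (v.length - n) = (v.drop (v.length - (k - 1))).drop (k - 1 - n) := by
        rw [List.drop_drop]
        congr 1
        omega
      rw [hu', hv', h2]
    have claim : ∀ d, ∀ z : List A, z.length + d = k → FactorCount u z = FactorCount v z := by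
      intro d
      induction d with
      | zero => intro z hz; exact h3 z (by omega)
      | succ m ih =>
        intro z hz
        have e1 := key_right u z S hSu
        have e2 := key_right v z S hSv
        rw [e1, e2]
        congr 1
        · apply Finset.sum_congr rfl
          intro a _
          apply ih
          simp; omega
        · apply if_congr _ rfl rfl
          rw [hsuf z.length (by omega)]
    intro z _hz hzle
    exact claim (k - z.length) z (by omega)
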